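/- Let n, m ≥ 1 and let π ∈ J_{2n,2m}. Then there exist exactly two subsets A ⊆ {1,…,2n+2m} such that π(A) = A and for every i ∈ {1,…,n+m} exactly one of 2i−1 and 2i belongs to A; moreover these two subsets are complements of each other in {1,…,2n+2m}. -/

import Mathlib

noncomputable def cycleCount {N : ℕ} (π : Equiv.Perm (Fin N)) : ℕ :=
  Set.ncard {O : Set (Fin N) | ∃ x, O = {y | π.SameCycle x y}}

noncomputable def cyclesIn {N : ℕ} (π : Equiv.Perm (Fin N)) (C : Set (Fin N)) : ℕ :=
  Set.ncard {O : Set (Fin N) | (∃ x, O = {y | π.SameCycle x y}) ∧ O ⊆ C}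

/-- The annular permutation `γ_{p,q}` of `{1,…,p+q}` (0-indexed as `Fin (p+q)`),
with the two cycles `(1,…,p)` and `(p+1,…,p+q)`. -/
def annularGamma (p q : ℕ) : Equiv.Perm (Fin (p + q)) :=
  finSumFinEquiv.permCongr ((finRotate p).sumCongr (finRotate q))

/-- The interval involution `I_N = (1 2)(3 4)⋯(N-1 N)` of `{1,…,N}`
(0-indexed: swaps `2i ↔ 2i+1`), for `N` even. -/
def intervalInvolution (N : ℕ) : Equiv.Perm (Fin N) :=
  Function.Involutive.toPerm
    (fun x => ⟨if x.val % 2 = 0 then min (x.val + 1) (N - 1) else x.val - 1, by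
      rcases x with ⟨v, hv⟩
      dsimp only
      split <;> omega⟩)
    (by
      intro x
      rcases x with ⟨v, hv⟩
      apply Fin.ext
      dsimp only
      split_ifs <;> omega)

/-- The subgroup generated by `π` and `ρ` acts transitively on `Fin N`. -/
def JointTrans {N : ℕ} (π ρ : Equiv.Perm (Fin N)) : Prop :=
  ∀ x y : Fin N, ∃ g ∈ Subgroup.closure ({π, ρ} : Set (Equiv.Perm (Fin N))), g x = y

/-- `α` separates even numbers: no cycle of `α` contains two distinct even numbers
(an element `x : Fin N` represents the number `x.val + 1`). -/
def SeparatesEven {N : ℕ} (α : Equiv.Perm (Fin N)) : Prop :=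
  ∀ x y : Fin N, α.SameCycle x y → (x.val + 1) % 2 = 0 → (y.val + 1) % 2 = 0 → x = y

/-- `π ∈ S_NC(p,q)`: annular non-crossing permutations. -/
def AnnularNC (p q : ℕ) (π : Equiv.Perm (Fin (p + q))) : Prop :=
  JointTrans π (annularGamma p q) ∧
    cycleCount π + cycleCount (π⁻¹ * annularGamma p q) = p + q

/-- `A` witnesses bipartiteness of the graph `G_π`: `π(A) = A` and for each `i`,
exactly one of the (1-indexed) numbers `2i-1`, `2i` belongs to `A`. -/
def BipartSet {N : ℕ} (π : Equiv.Perm (Fin N)) (A : Set (Fin N)) : Prop :=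
  (⇑π) '' A = A ∧ ∀ i : ℕ, ∀ h : 2 * i + 1 < N,
    Xor' ((⟨2 * i, Nat.lt_of_succ_lt h⟩ : Fin N) ∈ A) ((⟨2 * i + 1, h⟩ : Fin N) ∈ A)

/-- The graph `G_π` is bipartite. -/
def GraphBipartite {N : ℕ} (π : Equiv.Perm (Fin N)) : Prop :=
  ∃ A : Set (Fin N), BipartSet π A

/-- `π ∈ J_{2n,2m}`: annular non-crossing, bipartite graph, and `π⁻¹γ` separates even. -/
def memJ (n m : ℕ) (π : Equiv.Perm (Fin (2 * n + 2 * m))) : Prop :=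
  AnnularNC (2 * n) (2 * m) π ∧ GraphBipartite π ∧
    SeparatesEven (π⁻¹ * annularGamma (2 * n) (2 * m))


lemma gamma_even_val (p q : ℕ) (hp : p % 2 = 0) (hq : q % 2 = 0)
    (x : Fin (p + q)) (hx : x.val % 2 = 0) :
    ((annularGamma p q) x).val = x.val + 1 := by
  rcases Nat.lt_or_ge x.val p with h | h
  · obtain ⟨P, rfl⟩ : ∃ P, p = P + 1 := ⟨p - 1, by omega⟩
    have hxe : x = Fin.castAdd q ⟨x.val, h⟩ := by apply Fin.ext; simp
    rw [annularGamma, Equiv.permCongr_apply, hxe, finSumFinEquiv_symm_apply_castAdd]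
    simp only [Equiv.sumCongr_apply, Sum.map_inl, finSumFinEquiv_apply_left,
      Fin.coe_castAdd, finRotate_succ_apply, Fin.val_add_one]
    rw [if_neg]
    intro hlast
    have := congrArg Fin.val hlast
    simp [Fin.last] at this
    omega
  · obtain ⟨Q, rfl⟩ : ∃ Q, q = Q + 1 := ⟨q - 1, by omega⟩
    have hxq : x.val - p < Q + 1 := by omega
    have hxe : x = Fin.natAdd p ⟨x.val - p, hxq⟩ := by apply Fin.ext; simp; omega
    rw [annularGamma, Equiv.permCongr_apply, hxe, finSumFinEquiv_symm_apply_natAdd]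
    simp only [Equiv.sumCongr_apply, Sum.map_inr, finSumFinEquiv_apply_right,
      Fin.coe_natAdd, finRotate_succ_apply, Fin.val_add_one]
    rw [if_neg]
    · omega
    intro hlast
    have := congrArg Fin.val hlast
    simp [Fin.last] at this
    omega

lemma key_uniq (n m : ℕ) (hn : 1 ≤ n) (hm : 1 ≤ m)
    (π : Equiv.Perm (Fin (2 * n + 2 * m))) (hπ : memJ n m π)
    (A B : Set (Fin (2 * n + 2 * m))) (hA : BipartSet π A) (hB : BipartSet π B) :
    B = A ∨ B = Aᶜ := by
  classical
  set γ := annularGamma (2 * n) (2 * m) with hγdef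
  set σ := π⁻¹ * γ with hσ
  set P : Fin (2 * n + 2 * m) → Prop := fun x => (x ∈ B ↔ x ∈ A) with hPdef
  have hmem : ∀ (S : Set (Fin (2 * n + 2 * m))), ((⇑π) '' S = S) →
      ∀ x, π x ∈ S ↔ x ∈ S := by
    intro S hS x
    constructor
    · intro h
      rw [← hS] at h
      obtain ⟨a, ha, hax⟩ := h
      rwa [← π.injective hax]
    · intro h
      rw [← hS]
      exact ⟨x, h, rfl⟩
  have hPpi : ∀ x, P (π x) ↔ P x := by
    intro x
    simp only [hPdef, hmem A hA.1, hmem B hB.1]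
  have hpair : ∀ x y : Fin (2 * n + 2 * m), x.val % 2 = 0 → y.val = x.val + 1 →
      (P x ↔ P y) := by
    intro x y hx hy
    have hylt := y.isLt
    have hlt : 2 * (x.val / 2) + 1 < 2 * n + 2 * m := by omega
    have hXA := hA.2 (x.val / 2) hlt
    have hXB := hB.2 (x.val / 2) hlt
    have ex : (⟨2 * (x.val / 2), Nat.lt_of_succ_lt hlt⟩ : Fin (2 * n + 2 * m)) = x :=
      Fin.ext (by simp; omega)
    have ey : (⟨2 * (x.val / 2) + 1, hlt⟩ : Fin (2 * n + 2 * m)) = y :=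
      Fin.ext (by simp; omega)
    rw [ex, ey] at hXA hXB
    simp only [hPdef]
    unfold Xor' Xor at hXA hXB
    tauto
  have hπσ : ∀ x, π (σ x) = γ x := by
    intro x
    simp [hσ]
  have hgamma : ∀ x : Fin (2 * n + 2 * m), x.val % 2 = 0 → (γ x).val = x.val + 1 :=
    fun x hx => gamma_even_val _ _ (by omega) (by omega) x hx
  have heven : ∀ x : Fin (2 * n + 2 * m), x.val % 2 = 0 → (P (σ x) ↔ P x) := by
    intro x hx
    rw [← hPpi (σ x), hπσ x]
    exact (hpair x (γ x) hx (hgamma x hx)).symm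
  have hchain : ∀ k (t : Fin (2 * n + 2 * m)),
      (∀ j < k, ((σ ^ j) t).val % 2 = 0) → (P ((σ ^ k) t) ↔ P t) := by
    intro k
    induction k with
    | zero => simp
    | succ k ih =>
      intro t ht
      have h0 : t.val % 2 = 0 := by simpa using ht 0 (Nat.succ_pos k)
      have hps : (σ ^ (k + 1)) t = (σ ^ k) (σ t) := by
        rw [pow_succ]; rfl
      rw [hps, ih (σ t) (fun j hj => by
        have h1 := ht (j + 1) (by omega)
        have : (σ ^ (j + 1)) t = (σ ^ j) (σ t) := by rw [pow_succ]; rfl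
        rwa [this] at h1)]
      exact heven t h0
  have hsig : ∀ x : Fin (2 * n + 2 * m), P (σ x) ↔ P x := by
    intro x
    by_cases hx : x.val % 2 = 0
    · exact heven x hx
    · set t := σ x with htdef
      have hone : 1 ≤ orderOf σ := (orderOf_pos σ)
      have hr : (σ ^ (orderOf σ - 1)) t = x := by
        have h1 : (σ ^ (orderOf σ - 1 + 1)) x = x := by
          rw [Nat.sub_add_cancel hone, pow_orderOf_eq_one]; rfl
        rw [pow_succ] at h1
        exact h1
      have hex : ∃ j, ¬ (((σ ^ j) t).val % 2 = 0) := ⟨orderOf σ - 1, by rw [hr]; omega⟩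
      set k := Nat.find hex with hkdef
      have hk1 : ¬ (((σ ^ k) t).val % 2 = 0) := Nat.find_spec hex
      have hklt : ∀ j < k, ((σ ^ j) t).val % 2 = 0 := by
        intro j hj
        have := Nat.find_min hex hj
        omega
      have hsame : σ.SameCycle x ((σ ^ k) t) :=
        ⟨((k + 1 : ℕ) : ℤ), by rw [zpow_natCast, pow_succ]; rfl⟩
      have hxeq : x = (σ ^ k) t :=
        hπ.2.2 x ((σ ^ k) t) hsame (by omega) (by omega)
      rw [show P t ↔ P ((σ ^ k) t) from (hchain k t hklt).symm, ← hxeq]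
  have hPgamma : ∀ x, P (γ x) ↔ P x := by
    intro x
    rw [← hπσ x, hPpi]
    exact hsig x
  have hgen : ∀ g ∈ Subgroup.closure ({π, γ} : Set (Equiv.Perm (Fin (2 * n + 2 * m)))),
      ∀ x, P (g x) ↔ P x := by
    intro g hg
    induction hg using Subgroup.closure_induction with
    | mem g hgmem =>
      rcases hgmem with rfl | rfl
      · exact hPpi
      · exact hPgamma
    | one => intro x; rfl
    | mul a b ha hb iha ihb =>
      intro x
      rw [show (a * b) x = a (b x) from rfl, iha, ihb]
    | inv a ha iha =>
      intro x
      have h1 := iha (a⁻¹ x)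
      rw [show a (a⁻¹ x) = x from Equiv.apply_symm_apply a x] at h1
      exact h1.symm
  have hconst : ∀ x y : Fin (2 * n + 2 * m), P x ↔ P y := by
    intro x y
    obtain ⟨g, hg, hgy⟩ := hπ.1.1 x y
    rw [← hgy]
    exact (hgen g hg x).symm
  by_cases h0 : P ⟨0, by omega⟩
  · left
    ext x
    have := (hconst x ⟨0, by omega⟩).mpr h0
    simpa only [hPdef] using this
  · right
    ext x
    have hx : ¬ P x := fun hx => h0 ((hconst ⟨0, by omega⟩ x).mpr hx)
    simp only [hPdef, not_iff] at hx
    simp only [Set.mem_compl_iff]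
    tauto

theorem stmt_2 (n m : ℕ) (hn : 1 ≤ n) (hm : 1 ≤ m)
    (π : Equiv.Perm (Fin (2 * n + 2 * m))) (hπ : memJ n m π) :
    ∃ A : Set (Fin (2 * n + 2 * m)), BipartSet π A ∧ BipartSet π Aᶜ ∧ A ≠ Aᶜ ∧
      ∀ B : Set (Fin (2 * n + 2 * m)), BipartSet π B → B = A ∨ B = Aᶜ := by
    classical
  obtain ⟨hNC, ⟨A, hA⟩, hsep⟩ := hπ
  refine ⟨A, hA, ⟨?_, ?_⟩, ?_, ?_⟩
  · rw [Set.image_compl_eq π.bijective, hA.1]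
  · intro i h
    have := hA.2 i h
    simp only [Set.mem_compl_iff]
    unfold Xor' Xor at this ⊢
    tauto
  · intro hEq
    have x0 : Fin (2 * n + 2 * m) := ⟨0, by omega⟩
    rcases em (x0 ∈ A) with h | h
    · exact (hEq ▸ h : x0 ∈ Aᶜ) h
    · exact h (hEq ▸ (h : x0 ∈ Aᶜ))
  · intro B hB
    exact key_uniq n m hn hm π ⟨hNC, ⟨A, hA⟩, hsep⟩ A B hA hB
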